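/- For every infinite cardinal κ there exists an Ulam matrix: a family ⟨M_{α,ζ} : α < κ⁺, ζ < κ⟩ of subsets of κ⁺ such that (i) M_{α,ξ} ∩ M_{β,ξ} = ∅ whenever α ≠ β are below κ⁺ and ξ < κ; (ii) M_{α,ξ} ∩ M_{α,ζ} = ∅ whenever α < κ⁺ and ξ ≠ ζ are below κ; (iii) for each α < κ⁺, the set κ⁺ \ ⋃_{ζ<κ} M_{α,ζ} has cardinality at most κ. -/

import Mathlib

set_option autoImplicit false

open Cardinal Set

universe u
lemma aux_exists_inj {T K : Type u} (A : Set T) (h1 : #A ≤ #K) (hK : ℵ₀ ≤ #K)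
    (h2 : #K ≤ #(↥Aᶜ)) : ∃ f : K → T, Function.Injective f ∧ A ⊆ Set.range f := by
  obtain ⟨p, hp⟩ := Cardinal.le_mk_iff_exists_set.mp h2
  set C : Set T := Subtype.val '' p with hC
  have hCA : C ⊆ Aᶜ := by
    rintro x ⟨y, -, rfl⟩; exact y.2
  have hCcard : #C = #K := by
    rw [hC, Cardinal.mk_image_eq Subtype.val_injective, hp]
  have hcard : #(↥(A ∪ C)) = #K := by
    apply le_antisymm
    · calc #(↥(A ∪ C)) ≤ #A + #C := Cardinal.mk_union_le _ _
        _ ≤ #K + #K := add_le_add h1 hCcard.le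
        _ = #K := Cardinal.add_eq_self hK
    · rw [← hCcard]; exact Cardinal.mk_le_mk_of_subset subset_union_right
  obtain ⟨e⟩ := Cardinal.eq.mp hcard.symm
  refine ⟨fun k => (e k : T), fun a b hab => e.injective (Subtype.val_injective hab), ?_⟩
  intro x hx
  exact ⟨e.symm ⟨x, Or.inl hx⟩, by simp⟩

/-- for every infinite cardinal `κ` there is an Ulam matrix
`⟨M_{α,ζ} : α < κ⁺, ζ < κ⟩` of subsets of `κ⁺` satisfying (i) columns are pairwise
disjoint, (ii) rows are pairwise disjoint, and (iii) each row covers all of `κ⁺`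
except for a set of cardinality at most `κ`. -/
theorem exists_ulam_matrix (κ : Cardinal) (hκ : ℵ₀ ≤ κ) :
    ∃ M : (Order.succ κ).ord.ToType → κ.ord.ToType → Set ((Order.succ κ).ord.ToType),
      (∀ α β : (Order.succ κ).ord.ToType, α ≠ β → ∀ ξ : κ.ord.ToType,
          M α ξ ∩ M β ξ = ∅) ∧
      (∀ α : (Order.succ κ).ord.ToType, ∀ ξ ζ : κ.ord.ToType, ξ ≠ ζ →
          M α ξ ∩ M α ζ = ∅) ∧
      (∀ α : (Order.succ κ).ord.ToType,
          #(↥(Set.univ \ ⋃ ζ : κ.ord.ToType, M α ζ)) ≤ κ) := by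
  set T := (Order.succ κ).ord.ToType
  set K := κ.ord.ToType
  have hT : #T = Order.succ κ := Cardinal.mk_ord_toType _
  have hKcard : #K = κ := Cardinal.mk_ord_toType _
  have hKinf : ℵ₀ ≤ #K := hKcard ▸ hκ
  -- each initial segment Iic β has cardinality ≤ κ
  have hIio : ∀ β : T, #(Iio β) ≤ κ :=
    fun β => Order.lt_succ_iff.mp (Cardinal.mk_Iio_ord_toType β)
  have hIic : ∀ β : T, #(Iic β) ≤ κ := by
    intro β
    have : (Iic β : Set T) = insert β (Iio β) := by
      ext x; simp [le_iff_lt_or_eq, or_comm]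
    rw [this]
    calc #(insert β (Iio β) : Set T) ≤ #(Iio β) + 1 := Cardinal.mk_insert_le
      _ ≤ κ + κ := add_le_add (hIio β) (le_trans (by norm_num) hκ)
      _ = κ := Cardinal.add_eq_self hκ
  -- for each β, an injection f β : K → T covering Iic β
  have hf : ∀ β : T, ∃ f : K → T, Function.Injective f ∧ Iic β ⊆ Set.range f := by
    intro β
    apply aux_exists_inj _ (by rw [hKcard]; exact hIic β) hKinf
    -- #K ≤ #(↥(Iic β)ᶜ)
    by_contra h
    push_neg at h
    have hcompl : #(↥(Iic β)ᶜ) ≤ κ := by rw [hKcard] at h; exact h.le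
    have : #T ≤ κ := by
      calc #T = #(Iic β) + #(↥(Iic β)ᶜ) := (Cardinal.mk_sum_compl _).symm
        _ ≤ κ + κ := add_le_add (hIic β) hcompl
        _ = κ := Cardinal.add_eq_self hκ
    rw [hT] at this
    exact absurd this (not_le.mpr (Order.lt_succ κ))
  choose f hfinj hfcov using hf
  refine ⟨fun α ζ => {β | f β ζ = α}, ?_, ?_, ?_⟩
  · intro α β hαβ ξ
    ext x
    simp only [mem_inter_iff, mem_setOf_eq, mem_empty_iff_false, iff_false, not_and]
    intro h1 h2
    exact hαβ (h1.symm.trans h2)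
  · intro α ξ ζ hξζ
    ext x
    simp only [mem_inter_iff, mem_setOf_eq, mem_empty_iff_false, iff_false, not_and]
    intro h1 h2
    exact hξζ (hfinj x (h1.trans h2.symm))
  · intro α
    refine le_trans (Cardinal.mk_le_mk_of_subset (t := Iio α) ?_) (hIio α)
    rintro β ⟨-, hβ⟩
    simp only [mem_iUnion, mem_setOf_eq, not_exists] at hβ
    by_contra h
    have : α ∈ Iic β := Set.mem_Iic.mpr (not_lt.mp h)
    obtain ⟨ζ, hζ⟩ := hfcov β this
    exact hβ ζ hζ
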